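/- Let d_j, μ_j > 0, v_j ∈ ℝ, and define the (asymmetric) kernel K(s,w) := μ_j·e^{−(w + v_j s)²/(4 d_j s) − μ_j s}/(2·√(π d_j s)) for s > 0, w ∈ ℝ. Then for every c ∈ ℝ and every z ∈ ℝ with μ_j + (c − v_j)z − d_j z² > 0, one has ∫₀^∞∫_ℝ K(s,w)·e^{−z(cs+w)} dw ds = μ_j/(μ_j + (c − v_j)z − d_j z²); consequently, for p > μ_a > 0 the characteristic function χ(z,c) := z² − cz − μ_a + p·∫₀^∞∫_ℝ K(s,w)·e^{−z(cs+w)} dw ds equals z² − cz − μ_a + p·μ_j/(μ_j + (c − v_j)z − d_j z²), and this function of z is strictly convex (has everywhere positive second derivative) on the set of z ≥ 0 where μ_j + (c − v_j)z − d_j z² > 0. -/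

import Mathlib

open MeasureTheory Filter Set

noncomputable section

open Real in
lemma integral_rexp_quadratic {b : ℝ} (hb : 0 < b) (c d : ℝ) :
    ∫ x : ℝ, Real.exp (-b * x ^ 2 + c * x + d)
      = Real.sqrt (Real.pi / b) * Real.exp (d + c ^ 2 / (4 * b)) := by
  have hb' : (-(b:ℂ)).re < 0 := by simpa using hb
  have h := integral_cexp_quadratic hb' (c : ℂ) (d : ℂ)
  have h1 : ∀ x : ℝ, Complex.exp ((-(b:ℂ)) * (x:ℂ) ^ 2 + (c:ℂ) * (x:ℂ) + (d:ℂ))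
      = ((Real.exp (-b * x ^ 2 + c * x + d) : ℝ) : ℂ) := by
    intro x
    rw [Complex.ofReal_exp]
    push_cast
    ring_nf
  simp_rw [h1] at h
  rw [show (fun x : ℝ => ((Real.exp (-b * x ^ 2 + c * x + d) : ℝ) : ℂ)) = (fun x : ℝ => (RCLike.ofReal (Real.exp (-b * x ^ 2 + c * x + d)) : ℂ)) from rfl, integral_ofReal] at h
  have h2 : ((↑Real.pi : ℂ) / -(-(b:ℂ))) ^ (1 / 2 : ℂ) * Complex.exp ((d:ℂ) - (c:ℂ) ^ 2 / (4 * -(b:ℂ)))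
      = ((Real.sqrt (Real.pi / b) * Real.exp (d + c ^ 2 / (4 * b)) : ℝ) : ℂ) := by
    rw [Complex.ofReal_mul, Complex.ofReal_exp]
    congr 1
    · rw [Real.sqrt_eq_rpow, Complex.ofReal_cpow (by positivity) (1/2 : ℝ)]
      push_cast
      rw [neg_neg]
    · push_cast
      field_simp
      ring
  rw [h2] at h
  exact Complex.ofReal_injective h

open Real in
lemma Kmarine_inner {dj vj μj : ℝ} (hdj : 0 < dj) (c z : ℝ) {s : ℝ} (hs : 0 < s) :
    ∫ w : ℝ, (μj * Real.exp (-(w + vj * s) ^ 2 / (4 * dj * s) - μj * s) /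
        (2 * Real.sqrt (Real.pi * dj * s))) * Real.exp (-z * (c * s + w))
      = μj * Real.exp (-(μj + (c - vj) * z - dj * z ^ 2) * s) := by
  have hA : (0:ℝ) < 1 / (4 * dj * s) := by positivity
  set A : ℝ := 1 / (4 * dj * s) with hA_def
  set B : ℝ := -(vj / (2 * dj) + z) with hB_def
  set D : ℝ := -(vj ^ 2 * s / (4 * dj)) - μj * s - z * c * s with hD_def
  have key : ∀ w : ℝ,
      (μj * Real.exp (-(w + vj * s) ^ 2 / (4 * dj * s) - μj * s) /
        (2 * Real.sqrt (Real.pi * dj * s))) * Real.exp (-z * (c * s + w))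
      = (μj / (2 * Real.sqrt (Real.pi * dj * s))) * Real.exp (-A * w ^ 2 + B * w + D) := by
    intro w
    rw [div_mul_eq_mul_div, mul_assoc, ← Real.exp_add, mul_div_right_comm]
    congr 1
    rw [hA_def, hB_def, hD_def]
    field_simp
    ring
  rw [integral_congr_ae (Filter.Eventually.of_forall key), integral_const_mul,
    integral_rexp_quadratic hA]
  have hsqrt : Real.sqrt (Real.pi / A) = 2 * Real.sqrt (Real.pi * dj * s) := by
    rw [show Real.pi / A = 2 ^ 2 * (Real.pi * dj * s) by rw [hA_def]; field_simp; ring,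
      Real.sqrt_mul (by positivity), Real.sqrt_sq (by norm_num)]
  rw [hsqrt]
  have hpos : (0:ℝ) < Real.sqrt (Real.pi * dj * s) := by positivity
  rw [show D + B ^ 2 / (4 * A) = -(μj + (c - vj) * z - dj * z ^ 2) * s by
    rw [hA_def, hB_def, hD_def]; field_simp; ring]
  field_simp


/-- The asymmetric kernel of the marine population model. -/
def Kmarine (dj vj μj : ℝ) (s w : ℝ) : ℝ :=
  μj * Real.exp (-(w + vj * s) ^ 2 / (4 * dj * s) - μj * s) / (2 * Real.sqrt (Real.pi * dj * s))

/-- Computation of the exponential moment of the marine kernel, the resulting explicit form of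
the characteristic function, and its strict convexity in `z`. -/
theorem marine_kernel_moment
    (dj vj μj μa p : ℝ)
    (hdj : 0 < dj) (hμj : 0 < μj) (hμa : 0 < μa) (hp : μa < p) :
    -- the exponential moment
    (∀ c z : ℝ, 0 < μj + (c - vj) * z - dj * z ^ 2 →
      (∫ s in Set.Ioi (0:ℝ), ∫ w : ℝ, Kmarine dj vj μj s w * Real.exp (-z * (c * s + w)))
        = μj / (μj + (c - vj) * z - dj * z ^ 2)) ∧
    -- consequently, the explicit form of the characteristic function
    (∀ c z : ℝ, 0 < μj + (c - vj) * z - dj * z ^ 2 →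
      z ^ 2 - c * z - μa +
          p * (∫ s in Set.Ioi (0:ℝ), ∫ w : ℝ,
            Kmarine dj vj μj s w * Real.exp (-z * (c * s + w)))
        = z ^ 2 - c * z - μa + p * μj / (μj + (c - vj) * z - dj * z ^ 2)) ∧
    -- strict convexity: positive second derivative where the denominator is positive
    (∀ c z : ℝ, 0 ≤ z → 0 < μj + (c - vj) * z - dj * z ^ 2 →
      0 < deriv (deriv (fun y : ℝ =>
        y ^ 2 - c * y - μa + p * μj / (μj + (c - vj) * y - dj * y ^ 2))) z) := by
  have hmain : ∀ c z : ℝ, 0 < μj + (c - vj) * z - dj * z ^ 2 →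
      (∫ s in Set.Ioi (0:ℝ), ∫ w : ℝ, Kmarine dj vj μj s w * Real.exp (-z * (c * s + w)))
        = μj / (μj + (c - vj) * z - dj * z ^ 2) := by
    intro c z hlampos
    set lam : ℝ := μj + (c - vj) * z - dj * z ^ 2 with hlam_def
    have h1 : ∀ s ∈ Set.Ioi (0:ℝ),
        (∫ w : ℝ, Kmarine dj vj μj s w * Real.exp (-z * (c * s + w)))
          = μj * Real.exp (-(lam * s)) := by
      intro s hs
      have := Kmarine_inner (vj := vj) (μj := μj) hdj c z (Set.mem_Ioi.mp hs)
      rw [hlam_def, show -((μj + (c - vj) * z - dj * z ^ 2) * s)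
        = (dj * z ^ 2 - (μj + (c - vj) * z)) * s by ring]
      simpa [Kmarine, neg_mul] using this
    rw [setIntegral_congr_fun measurableSet_Ioi h1, integral_const_mul]
    have h2 : ∫ s in Set.Ioi (0:ℝ), Real.exp (-(lam * s)) = lam⁻¹ := by
      have := integral_comp_mul_left_Ioi (fun x : ℝ => Real.exp (-x)) 0 hlampos
      simp only [mul_zero, smul_eq_mul] at this
      rw [this, integral_exp_neg_Ioi_zero, mul_one]
    rw [h2, div_eq_mul_inv]
  refine ⟨hmain, fun c z hz => by rw [hmain c z hz, mul_div_assoc'], ?_⟩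
  intro c z hz0 hq
  have hpm : 0 < p * μj := mul_pos (hμa.trans hp) hμj
  set q : ℝ → ℝ := fun y => μj + (c - vj) * y - dj * y ^ 2 with hq_def
  have hqz : q z ≠ 0 := ne_of_gt hq
  have hqder : ∀ y : ℝ, HasDerivAt q (c - vj - 2 * dj * y) y := by
    intro y
    have h1 : HasDerivAt (fun y : ℝ => μj + (c - vj) * y - dj * y ^ 2)
        (0 + (c - vj) * 1 - dj * (2 * y ^ 1)) y := by
      exact (((hasDerivAt_const y μj).add ((hasDerivAt_id y).const_mul (c - vj))).sub
        ((hasDerivAt_pow 2 y).const_mul dj))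
    convert h1 using 1
    ring
  have hqcont : Continuous q := by fun_prop
  have hU : IsOpen {y : ℝ | q y ≠ 0} := isOpen_compl_singleton.preimage hqcont
  set g1 : ℝ → ℝ := fun y => 2 * y - c - p * μj * (c - vj - 2 * dj * y) / (q y) ^ 2 with hg1_def
  have hf : ∀ y : ℝ, q y ≠ 0 → HasDerivAt
      (fun y : ℝ => y ^ 2 - c * y - μa + p * μj / (μj + (c - vj) * y - dj * y ^ 2)) (g1 y) y := by
    intro y hy
    have h1 : HasDerivAt (fun y : ℝ => y ^ 2 - c * y - μa) (2 * y - c) y := by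
      have := (((hasDerivAt_pow 2 y)).sub ((hasDerivAt_id y).const_mul c)).sub
        (hasDerivAt_const y μa)
      refine this.congr_deriv ?_
      ring
    have h2 : HasDerivAt (fun y : ℝ => p * μj / q y)
        ((0 * q y - p * μj * (c - vj - 2 * dj * y)) / (q y) ^ 2) y :=
      (hasDerivAt_const y (p * μj)).div (hqder y) hy
    have h3 := h1.add h2
    refine h3.congr_deriv ?_
    rw [hg1_def]
    field_simp
    ring
  have hev : deriv (fun y : ℝ =>
      y ^ 2 - c * y - μa + p * μj / (μj + (c - vj) * y - dj * y ^ 2)) =ᶠ[nhds z] g1 :=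
    Filter.eventually_of_mem (hU.mem_nhds hqz) (fun y hy => (hf y hy).deriv)
  rw [hev.deriv_eq]
  -- second derivative of g1 at z
  have hnum : HasDerivAt (fun y : ℝ => p * μj * (c - vj - 2 * dj * y))
      (p * μj * (-(2 * dj))) z := by
    have h0 : HasDerivAt (fun y : ℝ => c - vj - 2 * dj * y) (-(2 * dj)) z := by
      simpa using ((hasDerivAt_id z).const_mul (2 * dj)).const_sub (c - vj)
    simpa using h0.const_mul (p * μj)
  have hden : HasDerivAt (fun y : ℝ => (q y) ^ 2) (2 * q z ^ 1 * (c - vj - 2 * dj * z)) z :=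
    (hqder z).pow 2
  have hdiv := hnum.div hden (pow_ne_zero 2 hqz)
  have hg1' : HasDerivAt g1
      (2 - (p * μj * (-(2 * dj)) * (q z) ^ 2 -
        p * μj * (c - vj - 2 * dj * z) * (2 * q z ^ 1 * (c - vj - 2 * dj * z))) /
          ((q z) ^ 2) ^ 2) z := by
    have hlin : HasDerivAt (fun y : ℝ => 2 * y - c) 2 z := by
      have := ((hasDerivAt_id z).const_mul 2).sub (hasDerivAt_const z c)
      refine this.congr_deriv ?_
      ring
    exact hlin.sub hdiv
  rw [hg1'.deriv]
  have hqpos : 0 < q z := hq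
  have hnumneg : (p * μj * (-(2 * dj)) * (q z) ^ 2 -
      p * μj * (c - vj - 2 * dj * z) * (2 * q z ^ 1 * (c - vj - 2 * dj * z))) < 0 := by
    have t1 : 0 < p * μj * (2 * dj) * (q z) ^ 2 := by positivity
    have t2 : 0 ≤ p * μj * (2 * q z) * (c - vj - 2 * dj * z) ^ 2 := by positivity
    nlinarith
  have : (p * μj * (-(2 * dj)) * (q z) ^ 2 -
      p * μj * (c - vj - 2 * dj * z) * (2 * q z ^ 1 * (c - vj - 2 * dj * z))) /
        ((q z) ^ 2) ^ 2 < 0 :=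
    div_neg_of_neg_of_pos hnumneg (by positivity)
  linarith
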